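/- Let S ⊆ ℝⁿ satisfy P₁(a), P₂(b), P₃(c), P₄(d) with c > b, d > 2b, and let (X_S, F_S) be the Delaunay triangulation. Then the piecewise-affine map F_S : |X_S| → ℝⁿ is injective. -/

import Mathlib

noncomputable section

/-- The Voronoi cell of `s ∈ S`. -/
def VorCell {n : ℕ} (S : Set (EuclideanSpace ℝ (Fin n))) (s : EuclideanSpace ℝ (Fin n)) :
    Set (EuclideanSpace ℝ (Fin n)) :=
  {x | dist x s = Metric.infDist x S}

/-- The simplices of the Delaunay complex `X_S`: nonempty finite subsets of `S`
whose Voronoi cells have a common point. -/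
def DelFaces {n : ℕ} (S : Set (EuclideanSpace ℝ (Fin n))) :
    Set (Finset (EuclideanSpace ℝ (Fin n))) :=
  {σ | σ.Nonempty ∧ ↑σ ⊆ S ∧ (⋂ s ∈ (σ : Set (EuclideanSpace ℝ (Fin n))), VorCell S s).Nonempty}

/-- The geometric realization `|X_S| ⊆ ℝ[S]`: barycentric weight functions supported
on a Delaunay simplex. -/
def DelReal {n : ℕ} (S : Set (EuclideanSpace ℝ (Fin n))) :
    Set (EuclideanSpace ℝ (Fin n) → ℝ) :=
  {w | ∃ σ ∈ DelFaces S, (∀ x ∉ σ, w x = 0) ∧ (∀ x, 0 ≤ w x) ∧ ∑ x ∈ σ, w x = 1}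

/-- The piecewise affine map `F_S : |X_S| → ℝⁿ` extending the inclusion `S ↪ ℝⁿ`. -/
def FS {n : ℕ} (w : EuclideanSpace ℝ (Fin n) → ℝ) : EuclideanSpace ℝ (Fin n) :=
  ∑ᶠ x, w x • x

/-- P₁(a): points of `S` are `a`-separated. -/
def P1 {n : ℕ} (S : Set (EuclideanSpace ℝ (Fin n))) (a : ℝ) : Prop :=
  ∀ s ∈ S, ∀ t ∈ S, s ≠ t → a ≤ dist s t

/-- P₂(b): every closed ball of radius `b` meets `S`. -/
def P2 {n : ℕ} (S : Set (EuclideanSpace ℝ (Fin n))) (b : ℝ) : Prop :=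
  ∀ x : EuclideanSpace ℝ (Fin n), ∃ s ∈ S, dist x s ≤ b

/-- P₃(c): every sphere of radius `< c` contains at most `n+1` points of `S`. -/
def P3 {n : ℕ} (S : Set (EuclideanSpace ℝ (Fin n))) (c : ℝ) : Prop :=
  ∀ (x : EuclideanSpace ℝ (Fin n)) (r : ℝ), 0 < r → r < c →
    ∀ T : Finset (EuclideanSpace ℝ (Fin n)), ↑T ⊆ S ∩ Metric.sphere x r → T.card ≤ n + 1

/-- P₄(d): any `n+1` points of `S` of diameter `≤ d` are affinely independent. -/
def P4 {n : ℕ} (S : Set (EuclideanSpace ℝ (Fin n))) (d : ℝ) : Prop :=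
  ∀ T : Finset (EuclideanSpace ℝ (Fin n)), ↑T ⊆ S → T.card = n + 1 →
    Metric.diam (T : Set (EuclideanSpace ℝ (Fin n))) ≤ d →
    AffineIndependent ℝ (fun p : (T : Set (EuclideanSpace ℝ (Fin n))) => (p : EuclideanSpace ℝ (Fin n)))

end

noncomputable section Aux

open Metric RealInnerProductSpace

variable {n : ℕ}

local notation "E" => EuclideanSpace ℝ (Fin n)

/-- A separated set intersected with a closed ball is finite. -/
lemma sep_finite {S : Set E} {a : ℝ} (ha : 0 < a) (hP1 : P1 S a) (x : E) (R : ℝ) :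
    (S ∩ Metric.closedBall x R).Finite := by
  obtain ⟨t, htf, hcov⟩ := Metric.totallyBounded_iff.1
    (isCompact_closedBall x R).totallyBounded (a/2) (by linarith)
  have hsub : S ∩ Metric.closedBall x R ⊆ ⋃ y ∈ t, S ∩ Metric.ball y (a/2) := by
    rintro p ⟨hpS, hpB⟩
    obtain ⟨y, hy, hyp⟩ := Set.mem_iUnion₂.1 (hcov hpB)
    exact Set.mem_iUnion₂.2 ⟨y, hy, hpS, hyp⟩
  refine Set.Finite.subset (htf.biUnion fun y _ => ?_) hsub
  apply Set.Subsingleton.finite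
  intro p hp q hq
  by_contra hne
  have hsep := hP1 p hp.1 q hq.1 hne
  have h1 : dist p y < a/2 := Metric.mem_ball.1 hp.2
  have h2 : dist q y < a/2 := Metric.mem_ball.1 hq.2
  have h3 : dist p q ≤ dist p y + dist y q := dist_triangle p y q
  rw [dist_comm y q] at h3
  linarith

/-- The set of points of `S` on the sphere centered at `z` of radius `infDist z S`. -/
def sphSet (S : Set E) (z : E) : Set E := S ∩ Metric.sphere z (Metric.infDist z S)

lemma sphSet_finite {S : Set E} {a : ℝ} (ha : 0 < a) (hP1 : P1 S a) (z : E) :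
    (sphSet S z).Finite :=
  (sep_finite ha hP1 z (Metric.infDist z S)).subset
    (Set.inter_subset_inter_right _ Metric.sphere_subset_closedBall)

lemma infDist_le_b {S : Set E} {b : ℝ} (hP2 : P2 S b) (z : E) : Metric.infDist z S ≤ b := by
  obtain ⟨s, hs, hd⟩ := hP2 z
  exact le_trans (Metric.infDist_le_dist_of_mem hs) hd

lemma sphSet_dist {S : Set E} {z : E} {s : E} (hs : s ∈ sphSet S z) :
    dist z s = Metric.infDist z S := by
  have := hs.2
  rw [Metric.mem_sphere] at this
  rw [dist_comm]; exact this

/-- Growing an empty sphere: if the sphere set has between `2` and `n` points, there is a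
bigger empty sphere. -/
lemma grow_step {S : Set E} {a b : ℝ} (ha : 0 < a) (hP1 : P1 S a) (hP2 : P2 S b)
    (z : E) (h2 : 2 ≤ (sphSet S z).ncard) (hn : (sphSet S z).ncard ≤ n) :
    ∃ z' : E, sphSet S z ⊂ sphSet S z' := by
  classical
  set r := Metric.infDist z S with hr
  have hSne : S.Nonempty := ⟨(hP2 z).choose, (hP2 z).choose_spec.1⟩
  set T := sphSet S z with hT
  have hfin : T.Finite := sphSet_finite ha hP1 z
  have hTS : T ⊆ S := Set.inter_subset_left
  have hdistT : ∀ s ∈ T, dist z s = r := fun s hs => sphSet_dist hs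
  obtain ⟨s₀, hs₀, s₁', hs₁', hne01⟩ := (Set.one_lt_ncard hfin).1 (by omega)
  -- orthogonal direction
  have hfr : Module.finrank ℝ (vectorSpan ℝ T) ≤ T.ncard - 1 := by
    have hcard : hfin.toFinset.card = T.ncard := (Set.ncard_eq_toFinset_card T hfin).symm
    have h1 : hfin.toFinset.card = (T.ncard - 1) + 1 := by omega
    have := finrank_vectorSpan_image_finset_le ℝ (id : E → E) hfin.toFinset h1
    have hset : (↑(Finset.image id hfin.toFinset) : Set E) = T := by
      simp [hfin.coe_toFinset]
    rwa [hset] at this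
  have hVne : vectorSpan ℝ T ≠ ⊤ := by
    intro htop
    have h2' : Module.finrank ℝ (vectorSpan ℝ T) = n := by
      rw [htop]
      simpa [finrank_top] using (finrank_euclideanSpace_fin (𝕜 := ℝ) (n := n))
    omega
  obtain ⟨v, hvmem, hvne⟩ := Submodule.exists_mem_ne_zero_of_ne_bot
    (fun hbot => hVne (Submodule.orthogonal_eq_bot_iff.mp hbot))
  set u : E := ‖v‖⁻¹ • v with hu
  have hunorm : ‖u‖ = 1 := norm_smul_inv_norm hvne
  have humem : u ∈ (vectorSpan ℝ T)ᗮ := Submodule.smul_mem _ _ hvmem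
  have hperp : ∀ s ∈ T, ∀ s' ∈ T, ⟪s - s', u⟫ = 0 := by
    intro s hs s' hs'
    have hmem : s - s' ∈ vectorSpan ℝ T := by
      have := vsub_mem_vectorSpan ℝ hs hs'
      simpa using this
    exact (Submodule.mem_orthogonal _ u).1 humem (s - s') hmem
  -- key distance formula
  have keydist : ∀ s ∈ T, ∀ t : ℝ, dist (z + t • u) s = dist (z + t • u) s₀ := by
    intro s hs t
    have hsq : ∀ p ∈ T, dist (z + t • u) p ^ 2 = r^2 + 2 * t * ⟪z - s₀, u⟫ + t^2 := by
      intro p hp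
      have h1 : z + t • u - p = (z - p) + t • u := by abel
      rw [dist_eq_norm, h1, norm_add_sq_real]
      have h2 : ‖z - p‖ = r := by rw [← dist_eq_norm]; exact hdistT p hp
      have h3 : ⟪z - p, t • u⟫ = t * ⟪z - p, u⟫ := real_inner_smul_right _ _ _
      have h4 : ⟪z - p, u⟫ = ⟪z - s₀, u⟫ := by
        have h5 : ⟪(s₀ : E) - p, u⟫ + ⟪z - s₀, u⟫ = ⟪z - p, u⟫ := by
          rw [← inner_add_left]
          congr 1
          abel
        rw [← h5, hperp s₀ hs₀ p hp, zero_add]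
      have h6 : ‖t • u‖^2 = t^2 := by
        rw [norm_smul, hunorm, mul_one, Real.norm_eq_abs, sq_abs]
      rw [h3, h4, h2, h6]; ring
    have heq := (hsq s hs).trans (hsq s₀ hs₀).symm
    rw [← Real.sqrt_sq (dist_nonneg (x := z + t • u) (y := s)), heq,
      Real.sqrt_sq (dist_nonneg (x := z + t • u) (y := s₀))]
  set ρ : ℝ → ℝ := fun t => dist (z + t • u) s₀ with hρ
  set g : ℝ → ℝ := fun t => Metric.infDist (z + t • u) S with hg
  have hgb : ∀ t, g t ≤ b := fun t => infDist_le_b hP2 _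
  have hgρ : ∀ t, g t ≤ ρ t := fun t => Metric.infDist_le_dist_of_mem (hTS hs₀)
  have hρub : ∀ t : ℝ, 0 ≤ t → t - r ≤ ρ t := by
    intro t ht
    have h1 : dist (z + t • u) z ≤ ρ t + dist s₀ z := by
      have := dist_triangle (z + t • u) s₀ z
      linarith [this]
    have h2 : dist (z + t • u) z = t := by
      rw [dist_eq_norm]
      have : z + t • u - z = t • u := by abel
      rw [this, norm_smul, hunorm, mul_one, Real.norm_eq_abs, abs_of_nonneg ht]
    have h3 : dist s₀ z = r := by rw [dist_comm]; exact hdistT s₀ hs₀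
    rw [h2, h3] at h1
    linarith
  set A : Set ℝ := {t | 0 ≤ t ∧ ρ t ≤ g t} with hA
  have hA0 : (0:ℝ) ∈ A := by
    constructor
    · exact le_refl 0
    · have h1 : ρ 0 = r := by
        show dist (z + (0:ℝ) • u) s₀ = r
        rw [zero_smul, add_zero]
        exact hdistT s₀ hs₀
      have h2 : g 0 = r := by
        show Metric.infDist (z + (0:ℝ) • u) S = r
        rw [zero_smul, add_zero]
      rw [h1, h2]
  have hAbdd : BddAbove A := by
    refine ⟨b + r, fun t ht => ?_⟩
    by_contra hgt
    push_neg at hgt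
    have := hρub t ht.1
    have := hgb t
    have := ht.2
    linarith
  have hcc : Continuous fun t : ℝ => z + t • u :=
    continuous_const.add (continuous_id.smul continuous_const)
  have hcρ : Continuous ρ := hcc.dist continuous_const
  have hcg : Continuous g := (Metric.continuous_infDist_pt S).comp hcc
  have hAclosed : IsClosed A := by
    have hAeq : A = {t : ℝ | 0 ≤ t} ∩ {t | ρ t ≤ g t} := rfl
    rw [hAeq]
    exact (isClosed_le continuous_const continuous_id).inter (isClosed_le hcρ hcg)
  set t' := sSup A with ht'
  have htA : t' ∈ A := hAclosed.csSup_mem ⟨0, hA0⟩ hAbdd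
  set z' := z + t' • u with hz'
  have hinf' : Metric.infDist z' S = ρ t' := le_antisymm (hgρ t') htA.2
  have hTsub : T ⊆ sphSet S z' := by
    intro s hs
    refine ⟨hTS hs, ?_⟩
    rw [Metric.mem_sphere, hinf', dist_comm]
    exact keydist s hs t'
  -- find a new point
  set R : ℝ := r + t' + 2 with hR
  set F := (S ∩ Metric.closedBall z' R) \ T with hF
  have hFfin : F.Finite := (sep_finite ha hP1 z' R).subset Set.diff_subset
  set B : E → Set ℝ := fun s => {t ∈ Set.Icc t' (t' + 1) | dist (z + t • u) s ≤ ρ t} with hB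
  have hcover : Set.Ioc t' (t' + 1) ⊆ ⋃ s ∈ F, B s := by
    intro t ht
    have ht0 : 0 ≤ t := le_trans htA.1 (le_of_lt ht.1)
    have htnA : t ∉ A := fun hmem => not_lt.2 (le_csSup hAbdd hmem) ht.1
    have hglt : g t < ρ t := by
      by_contra hge
      push_neg at hge
      exact htnA ⟨ht0, hge⟩
    obtain ⟨s, hsS, hsd⟩ := (Metric.infDist_lt_iff hSne).1 hglt
    have hsT : s ∉ T := by
      intro hsT
      have heq : dist (z + t • u) s = ρ t := keydist s hsT t
      exact lt_irrefl _ (heq ▸ hsd)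
    have hρt : ρ t ≤ r + t := by
      have h1 := dist_triangle (z + t • u) z s₀
      have h2 : dist (z + t • u) z = t := by
        rw [dist_eq_norm]
        have h3 : z + t • u - z = t • u := by abel
        rw [h3, norm_smul, hunorm, mul_one, Real.norm_eq_abs, abs_of_nonneg ht0]
      have h4 : dist z s₀ = r := hdistT s₀ hs₀
      show dist (z + t • u) s₀ ≤ r + t
      rw [h2, h4] at h1
      linarith
    have hsF : s ∈ F := by
      refine ⟨⟨hsS, ?_⟩, hsT⟩
      rw [Metric.mem_closedBall]
      have hd1 : dist s z' ≤ dist s (z + t • u) + dist (z + t • u) z' := dist_triangle _ _ _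
      have hd2 : dist s (z + t • u) < ρ t := by rw [dist_comm]; exact hsd
      have hd3 : dist (z + t • u) z' = t - t' := by
        rw [dist_eq_norm, hz']
        have h5 : z + t • u - (z + t' • u) = (t - t') • u := by
          rw [sub_smul]; abel
        rw [h5, norm_smul, hunorm, mul_one, Real.norm_eq_abs,
          abs_of_nonneg (by linarith [ht.1] : (0:ℝ) ≤ t - t')]
      have ht1 : t ≤ t' + 1 := ht.2
      calc dist s z' ≤ dist s (z + t • u) + dist (z + t • u) z' := hd1
        _ ≤ ρ t + (t - t') := by rw [hd3]; linarith
        _ ≤ (r + t) + (t - t') := by linarith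
        _ ≤ R := by rw [hR]; linarith
    exact Set.mem_iUnion₂.2 ⟨s, hsF, ⟨Set.mem_Icc.2 ⟨le_of_lt ht.1, ht.2⟩, le_of_lt hsd⟩⟩
  have hclosedU : IsClosed (⋃ s ∈ F, B s) := by
    refine Set.Finite.isClosed_biUnion hFfin fun s _ => ?_
    have hBeq : B s = Set.Icc t' (t' + 1) ∩ {t | dist (z + t • u) s ≤ ρ t} := rfl
    rw [hBeq]
    exact isClosed_Icc.inter (isClosed_le (hcc.dist continuous_const) hcρ)
  have ht'mem : t' ∈ ⋃ s ∈ F, B s := by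
    have hIcc : Set.Icc t' (t' + 1) ⊆ ⋃ s ∈ F, B s := by
      have h6 := closure_minimal hcover hclosedU
      rwa [closure_Ioc (by linarith : t' ≠ t' + 1)] at h6
    exact hIcc ⟨le_refl t', by linarith⟩
  obtain ⟨s₁, hs₁F, hs₁mem⟩ := Set.mem_iUnion₂.1 ht'mem
  have hd1 : dist (z + t' • u) s₁ ≤ ρ t' := hs₁mem.2
  have hd2 : ρ t' ≤ dist z' s₁ := hinf' ▸ Metric.infDist_le_dist_of_mem hs₁F.1.1
  have hs₁sph : s₁ ∈ sphSet S z' := by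
    refine ⟨hs₁F.1.1, ?_⟩
    rw [Metric.mem_sphere, hinf', dist_comm]
    exact le_antisymm hd1 hd2
  exact ⟨z', (Set.ssubset_iff_of_subset hTsub).2 ⟨s₁, hs₁sph, hs₁F.2⟩⟩

lemma indep_of_card {S : Set E} {a b c d : ℝ} (ha : 0 < a) (hb : 0 < b)
    (hP1 : P1 S a) (hP2 : P2 S b) (hP3 : P3 S c) (hP4 : P4 S d)
    (hcb : b < c) (hdb : 2 * b < d) (z : E) (hcard : (sphSet S z).ncard = n + 1) :
    AffineIndependent ℝ ((↑) : (sphSet S z) → E) := by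
  classical
  set r := Metric.infDist z S with hr
  have hfin : (sphSet S z).Finite := sphSet_finite ha hP1 z
  have hrb : r ≤ b := infDist_le_b hP2 z
  have hsubS : ↑hfin.toFinset ⊆ S := by
    rw [hfin.coe_toFinset]; exact Set.inter_subset_left
  have hcard' : hfin.toFinset.card = n + 1 := by
    rw [← Set.ncard_eq_toFinset_card _ hfin]; exact hcard
  have hdiam : Metric.diam (↑hfin.toFinset : Set E) ≤ d := by
    refine Metric.diam_le_of_forall_dist_le (by linarith) ?_
    intro x hx y hy
    rw [hfin.coe_toFinset] at hx hy
    have h1 : dist z x = r := sphSet_dist hx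
    have h2 : dist z y = r := sphSet_dist hy
    have h3 := dist_triangle x z y
    rw [dist_comm x z] at h3
    linarith
  have hind := hP4 hfin.toFinset hsubS hcard' hdiam
  rw [hfin.coe_toFinset] at hind
  exact hind

lemma sphSet_ncard_le {S : Set E} {a b c : ℝ} (ha : 0 < a) (hb : 0 < b)
    (hP1 : P1 S a) (hP2 : P2 S b) (hP3 : P3 S c) (hcb : b < c) (z : E) :
    (sphSet S z).ncard ≤ n + 1 := by
  classical
  set r := Metric.infDist z S with hr
  have hfin : (sphSet S z).Finite := sphSet_finite ha hP1 z
  rcases le_or_gt (sphSet S z).ncard 1 with h | h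
  · omega
  · obtain ⟨s, hs, t, ht, hst⟩ := (Set.one_lt_ncard hfin).1 h
    have hr0 : 0 < r := by
      rcases lt_or_eq_of_le (Metric.infDist_nonneg (x := z) (s := S)) with h' | h'
      · exact h'
      · exfalso
        have hr00 : r = 0 := by rw [hr, ← h']
        have h1 : dist z s = 0 := (sphSet_dist hs).trans hr00
        have h2 : dist z t = 0 := (sphSet_dist ht).trans hr00
        have hzs := dist_eq_zero.1 h1
        have hzt := dist_eq_zero.1 h2
        exact hst (by rw [← hzs, ← hzt])
    have hrc : r < c := lt_of_le_of_lt (infDist_le_b hP2 z) hcb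
    have hsub : ↑hfin.toFinset ⊆ S ∩ Metric.sphere z r := by
      rw [hfin.coe_toFinset]
      exact fun x hx => hx
    have := hP3 z r hr0 hrc hfin.toFinset hsub
    rwa [Set.ncard_eq_toFinset_card _ hfin]

lemma sphSet_indep {S : Set E} {a b c d : ℝ} (ha : 0 < a) (hb : 0 < b)
    (hP1 : P1 S a) (hP2 : P2 S b) (hP3 : P3 S c) (hP4 : P4 S d)
    (hcb : b < c) (hdb : 2 * b < d) (z : E) :
    AffineIndependent ℝ ((↑) : (sphSet S z) → E) := by
  classical
  suffices h : ∀ k : ℕ, ∀ z : E, n + 1 ≤ k + (sphSet S z).ncard →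
      AffineIndependent ℝ ((↑) : (sphSet S z) → E) by
    exact h (n + 1) z (by omega)
  intro k
  induction k with
  | zero =>
    intro z hcard
    exact indep_of_card ha hb hP1 hP2 hP3 hP4 hcb hdb z (by
      have := sphSet_ncard_le ha hb hP1 hP2 hP3 hcb z
      omega)
  | succ k ih =>
    intro z hcard
    have hub := sphSet_ncard_le ha hb hP1 hP2 hP3 hcb z
    rcases le_or_gt (sphSet S z).ncard 1 with hsmall | hbig
    · have hss : (sphSet S z).Subsingleton := fun x hx y hy =>
        (Set.ncard_le_one (sphSet_finite ha hP1 z)).1 hsmall x hx y hy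
      haveI : Subsingleton (sphSet S z) := hss.coe_sort
      exact affineIndependent_of_subsingleton ℝ _
    · rcases eq_or_lt_of_le hub with heq | hlt
      · exact indep_of_card ha hb hP1 hP2 hP3 hP4 hcb hdb z heq
      · -- 2 ≤ ncard ≤ n : grow
        obtain ⟨z', hss⟩ := grow_step ha hP1 hP2 z (by omega) (by omega)
        have hcard' : (sphSet S z).ncard < (sphSet S z').ncard :=
          Set.ncard_lt_ncard hss (sphSet_finite ha hP1 z')
        have hind := ih z' (by omega)
        exact hind.mono hss.subset

lemma lift_sum {σ : Finset E} {w : E → ℝ} (hsum : ∑ x ∈ σ, w x = 1) (z : E) (r : ℝ) :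
    ∑ s ∈ σ, w s * (dist z s ^ 2 - r ^ 2) =
      (∑ s ∈ σ, w s * ‖s‖ ^ 2) - 2 * ⟪z, ∑ s ∈ σ, w s • s⟫ + ‖z‖ ^ 2 - r ^ 2 := by
  have h1 : ∀ s ∈ σ, w s * (dist z s ^ 2 - r ^ 2)
      = w s * ‖s‖ ^ 2 - 2 * (w s * ⟪z, s⟫) + (‖z‖ ^ 2 - r ^ 2) * w s := by
    intro s _
    rw [dist_eq_norm, norm_sub_sq_real]
    ring
  rw [Finset.sum_congr rfl h1, inner_sum]
  have h2 : ∀ s ∈ σ, ⟪z, w s • s⟫ = w s * ⟪z, s⟫ := fun s _ => real_inner_smul_right _ _ _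
  rw [Finset.sum_congr rfl h2, Finset.sum_add_distrib, Finset.sum_sub_distrib,
    ← Finset.mul_sum, ← Finset.mul_sum, hsum, mul_one]
  ring

end Aux

set_option maxHeartbeats 2000000 in
/-- under `P₁(a), P₂(b), P₃(c), P₄(d)` with `c > b`, `d > 2b`, the
piecewise affine map `F_S : |X_S| → ℝⁿ` of the Delaunay complex is injective. -/
theorem stmt_17 {n : ℕ} (S : Set (EuclideanSpace ℝ (Fin n))) (a b c d : ℝ)
    (ha : 0 < a) (hb : 0 < b)
    (hP1 : P1 S a) (hP2 : P2 S b) (hP3 : P3 S c) (hP4 : P4 S d)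
    (hcb : b < c) (hdb : 2 * b < d) :
    Set.InjOn FS (DelReal S) := by
  classical
  intro w hw w' hw' heq
  obtain ⟨σ, ⟨hσne, hσS, z, hz⟩, hw0, hwnn, hwsum⟩ := hw
  obtain ⟨σ', ⟨hσne', hσS', z', hz'⟩, hw0', hwnn', hwsum'⟩ := hw'
  have hzV : ∀ s ∈ σ, dist z s = Metric.infDist z S := fun s hs =>
    Set.mem_iInter₂.1 hz s (by exact_mod_cast hs)
  have hzV' : ∀ s ∈ σ', dist z' s = Metric.infDist z' S := fun s hs =>
    Set.mem_iInter₂.1 hz' s (by exact_mod_cast hs)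
  have hFSw : FS w = ∑ x ∈ σ, w x • x := by
    apply finsum_eq_sum_of_support_subset
    intro x hx
    simp only [Function.mem_support] at hx
    by_contra hxσ
    exact hx (by rw [hw0 x hxσ, zero_smul])
  have hFSw' : FS w' = ∑ x ∈ σ', w' x • x := by
    apply finsum_eq_sum_of_support_subset
    intro x hx
    simp only [Function.mem_support] at hx
    by_contra hxσ
    exact hx (by rw [hw0' x hxσ, zero_smul])
  have hxw' : FS w = ∑ x ∈ σ', w' x • x := heq.symm ▸ hFSw'
  have hq0 : ∑ s ∈ σ, w s * (dist z s ^ 2 - Metric.infDist z S ^ 2) = 0 :=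
    Finset.sum_eq_zero fun s hs => by rw [hzV s hs]; ring
  have hq0' : ∑ s ∈ σ', w' s * (dist z' s ^ 2 - Metric.infDist z' S ^ 2) = 0 :=
    Finset.sum_eq_zero fun s hs => by rw [hzV' s hs]; ring
  have hnnterm : ∀ (zz : EuclideanSpace ℝ (Fin n)) (s : EuclideanSpace ℝ (Fin n)), s ∈ S →
      0 ≤ dist zz s ^ 2 - Metric.infDist zz S ^ 2 := by
    intro zz s hs
    have h1 : Metric.infDist zz S ≤ dist zz s := Metric.infDist_le_dist_of_mem hs
    have h2 : 0 ≤ Metric.infDist zz S := Metric.infDist_nonneg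
    nlinarith
  have hqnn : 0 ≤ ∑ s ∈ σ', w' s * (dist z s ^ 2 - Metric.infDist z S ^ 2) :=
    Finset.sum_nonneg fun s hs => mul_nonneg (hwnn' s) (hnnterm z s (hσS' hs))
  have hqnn' : 0 ≤ ∑ s ∈ σ, w s * (dist z' s ^ 2 - Metric.infDist z' S ^ 2) :=
    Finset.sum_nonneg fun s hs => mul_nonneg (hwnn s) (hnnterm z' s (hσS hs))
  rw [lift_sum hwsum z (Metric.infDist z S), ← hFSw] at hq0
  rw [lift_sum hwsum' z' (Metric.infDist z' S), ← hxw'] at hq0'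
  rw [lift_sum hwsum z' (Metric.infDist z' S), ← hFSw] at hqnn'
  have hsum0 : ∑ s ∈ σ', w' s * (dist z s ^ 2 - Metric.infDist z S ^ 2) = 0 := by
    rw [lift_sum hwsum' z (Metric.infDist z S), ← hxw'] at hqnn ⊢
    linarith
  have hterm := (Finset.sum_eq_zero_iff_of_nonneg
    (fun s hs => mul_nonneg (hwnn' s) (hnnterm z s (hσS' hs)))).1 hsum0
  have hkey' : ∀ s, w' s ≠ 0 → s ∈ sphSet S z := by
    intro s hws
    have hsσ' : s ∈ σ' := by
      by_contra h
      exact hws (hw0' s h)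
    have h0 := hterm s hsσ'
    rcases mul_eq_zero.1 h0 with h | h
    · exact absurd h hws
    · have hsq : dist z s ^ 2 = Metric.infDist z S ^ 2 := by linarith
      have hds : dist z s = Metric.infDist z S := by
        rw [← Real.sqrt_sq dist_nonneg, hsq, Real.sqrt_sq Metric.infDist_nonneg]
      exact ⟨hσS' hsσ', by rw [Metric.mem_sphere, dist_comm]; exact hds⟩
  have hkey : ∀ s, w s ≠ 0 → s ∈ sphSet S z := by
    intro s hws
    have hsσ : s ∈ σ := by
      by_contra h
      exact hws (hw0 s h)
    exact ⟨hσS hsσ, by rw [Metric.mem_sphere, dist_comm]; exact hzV s hsσ⟩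
  have hfin : (sphSet S z).Finite := sphSet_finite ha hP1 z
  have hind := sphSet_indep ha hb hP1 hP2 hP3 hP4 hcb hdb z
  set Tf := hfin.toFinset with hTf
  -- transport affine independence to the finset
  have hindF : AffineIndependent ℝ (fun p : Tf => (p : EuclideanSpace ℝ (Fin n))) := by
    let e : Tf ↪ (sphSet S z) :=
      ⟨fun p => ⟨p.1, hfin.mem_toFinset.1 p.2⟩, fun p q hpq => by
        apply Subtype.ext
        exact congrArg (fun x : sphSet S z => (x : EuclideanSpace ℝ (Fin n))) hpq⟩
    exact hind.comp_embedding e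
  -- sums over Tf
  have hsT : ∑ s ∈ Tf, w s = 1 := by
    have h1 : ∑ s ∈ σ ∪ Tf, w s = ∑ s ∈ σ, w s :=
      (Finset.sum_subset Finset.subset_union_left fun x _ hxσ => hw0 x hxσ).symm
    have h2 : ∑ s ∈ σ ∪ Tf, w s = ∑ s ∈ Tf, w s :=
      (Finset.sum_subset Finset.subset_union_right fun x _ hxT => by
        by_contra h
        exact hxT (hfin.mem_toFinset.2 (hkey x h))).symm
    rw [← h2, h1, hwsum]
  have hsT' : ∑ s ∈ Tf, w' s = 1 := by
    have h1 : ∑ s ∈ σ' ∪ Tf, w' s = ∑ s ∈ σ', w' s :=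
      (Finset.sum_subset Finset.subset_union_left fun x _ hxσ => hw0' x hxσ).symm
    have h2 : ∑ s ∈ σ' ∪ Tf, w' s = ∑ s ∈ Tf, w' s :=
      (Finset.sum_subset Finset.subset_union_right fun x _ hxT => by
        by_contra h
        exact hxT (hfin.mem_toFinset.2 (hkey' x h))).symm
    rw [← h2, h1, hwsum']
  have hvT : ∑ s ∈ Tf, w s • s = FS w := by
    have h1 : ∑ s ∈ σ ∪ Tf, w s • s = ∑ s ∈ σ, w s • s :=
      (Finset.sum_subset Finset.subset_union_left fun x _ hxσ => by
        rw [hw0 x hxσ, zero_smul]).symm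
    have h2 : ∑ s ∈ σ ∪ Tf, w s • s = ∑ s ∈ Tf, w s • s :=
      (Finset.sum_subset Finset.subset_union_right fun x _ hxT => by
        by_contra h
        exact hxT (hfin.mem_toFinset.2 (hkey x (fun h0 => h (by rw [h0, zero_smul]))))).symm
    rw [← h2, h1, hFSw]
  have hvT' : ∑ s ∈ Tf, w' s • s = FS w := by
    have h1 : ∑ s ∈ σ' ∪ Tf, w' s • s = ∑ s ∈ σ', w' s • s :=
      (Finset.sum_subset Finset.subset_union_left fun x _ hxσ => by
        rw [hw0' x hxσ, zero_smul]).symm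
    have h2 : ∑ s ∈ σ' ∪ Tf, w' s • s = ∑ s ∈ Tf, w' s • s :=
      (Finset.sum_subset Finset.subset_union_right fun x _ hxT => by
        by_contra h
        exact hxT (hfin.mem_toFinset.2 (hkey' x (fun h0 => h (by rw [h0, zero_smul]))))).symm
    rw [← h2, h1, hxw']
  -- uniqueness of barycentric coordinates
  have hsum1 : ∑ p : Tf, w ↑p = 1 := by rw [Finset.sum_coe_sort Tf w]; exact hsT
  have hsum2 : ∑ p : Tf, w' ↑p = 1 := by rw [Finset.sum_coe_sort Tf w']; exact hsT'
  have hcomb : Finset.univ.affineCombination ℝ (fun p : Tf => (p : EuclideanSpace ℝ (Fin n)))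
      (fun p => w ↑p) = Finset.univ.affineCombination ℝ
      (fun p : Tf => (p : EuclideanSpace ℝ (Fin n))) (fun p => w' ↑p) := by
    rw [Finset.affineCombination_eq_linear_combination _ _ _ hsum1,
      Finset.affineCombination_eq_linear_combination _ _ _ hsum2]
    have e1 : ∑ p : Tf, w ↑p • (p : EuclideanSpace ℝ (Fin n)) = ∑ s ∈ Tf, w s • s :=
      Finset.sum_coe_sort Tf (fun s => w s • s)
    have e2 : ∑ p : Tf, w' ↑p • (p : EuclideanSpace ℝ (Fin n)) = ∑ s ∈ Tf, w' s • s :=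
      Finset.sum_coe_sort Tf (fun s => w' s • s)
    rw [e1, e2, hvT, hvT']
  have hwe := (affineIndependent_iff_eq_of_fintype_affineCombination_eq ℝ
    (fun p : Tf => (p : EuclideanSpace ℝ (Fin n)))).1 hindF _ _ hsum1 hsum2 hcomb
  funext x0
  by_cases hx0 : x0 ∈ Tf
  · exact congrFun hwe ⟨x0, hx0⟩
  · have h1 : w x0 = 0 := by
      by_contra h
      exact hx0 (hfin.mem_toFinset.2 (hkey x0 h))
    have h2 : w' x0 = 0 := by
      by_contra h
      exact hx0 (hfin.mem_toFinset.2 (hkey' x0 h))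
    rw [h1, h2]
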